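/- Let c ∈ ℝ, ρ(r) = -1/(r - i c), ρ̄ = conj(ρ), and set y₁(r) = ρ̄(ρ+ρ̄), y₂(r) = ρ̄(ρ̄-2ρ)/ρ³. If a, b ∈ ℂ and there exists r₀ > 0 such that a y₁(r₀) + b y₂(r₀) = 0 and a y₁'(r₀) + b y₂'(r₀) = 0, then a = b = 0. -/

import Mathlib

open Complex

/-- Kerr optical scalar ρ(r) = -1/(r - i c). -/
noncomputable def rhoK (c : ℝ) (r : ℝ) : ℂ := -1 / ((r : ℂ) - c * Complex.I)

/-- Complex conjugate ρ̄. -/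
noncomputable def rhoKbar (c : ℝ) (r : ℝ) : ℂ := (starRingEnd ℂ) (rhoK c r)

/-- y₁ = ρ̄(ρ+ρ̄). -/
noncomputable def y₁K (c : ℝ) (r : ℝ) : ℂ := rhoKbar c r * (rhoK c r + rhoKbar c r)

/-- y₂ = ρ̄(ρ̄-2ρ)/ρ³. -/
noncomputable def y₂K (c : ℝ) (r : ℝ) : ℂ :=
  rhoKbar c r * (rhoKbar c r - 2 * rhoK c r) / (rhoK c r) ^ 3

/-- Holomorphic extension of y₁ (u stands for c·I). -/
noncomputable def H₁ (u t : ℂ) : ℂ := 2 * t / ((t - u) * (t + u) ^ 2)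

/-- Holomorphic extension of y₂ (u stands for c·I). -/
noncomputable def H₂ (u t : ℂ) : ℂ := (t - u) ^ 2 * (t + 3 * u) / (t + u) ^ 2

/-- Derivative of H₁. -/
noncomputable def D₁ (u t : ℂ) : ℂ :=
  2 * (-2 * t ^ 2 + u * t - u ^ 2) / ((t - u) ^ 2 * (t + u) ^ 3)

/-- Derivative of H₂. -/
noncomputable def D₂ (u t : ℂ) : ℂ :=
  (t - u) * (t ^ 2 + 4 * u * t + 11 * u ^ 2) / (t + u) ^ 3

lemma rhoKbar_eq (c : ℝ) (r : ℝ) : rhoKbar c r = -1 / ((r : ℂ) + c * Complex.I) := by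
  simp [rhoKbar, rhoK, map_div₀, map_sub, map_mul]

lemma zw_cases (c r : ℝ) :
    ((r : ℂ) - c * Complex.I = 0 ∧ (r : ℂ) + c * Complex.I = 0) ∨
    ((r : ℂ) - c * Complex.I ≠ 0 ∧ (r : ℂ) + c * Complex.I ≠ 0) := by
  by_cases h : (r : ℂ) - c * Complex.I = 0
  · left
    have hr : (r : ℂ) = c * Complex.I := by linear_combination h
    have h1 : (r : ℂ).im = ((c : ℂ) * Complex.I).im := by rw [hr]
    simp only [Complex.ofReal_im, Complex.mul_I_im, Complex.ofReal_re] at h1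
    refine ⟨h, ?_⟩
    rw [show (c : ℂ) = 0 by exact_mod_cast h1.symm] at hr ⊢
    simp [hr]
  · right
    refine ⟨h, fun h2 => h ?_⟩
    have := congrArg (starRingEnd ℂ) h2
    simp at this
    linear_combination this

lemma y₁K_eq (c : ℝ) (r : ℝ) : y₁K c r = H₁ ((c : ℂ) * Complex.I) (r : ℂ) := by
  rcases zw_cases c r with ⟨h1, h2⟩ | ⟨h1, h2⟩
  · simp [y₁K, rhoK, rhoKbar_eq, H₁, h1, h2]
  · simp only [y₁K, rhoK, rhoKbar_eq, H₁]
    set u : ℂ := (c : ℂ) * Complex.I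
    field_simp
    ring

lemma y₂K_eq (c : ℝ) (r : ℝ) : y₂K c r = H₂ ((c : ℂ) * Complex.I) (r : ℂ) := by
  rcases zw_cases c r with ⟨h1, h2⟩ | ⟨h1, h2⟩
  · simp [y₂K, rhoK, rhoKbar_eq, H₂, h1, h2]
  · simp only [y₂K, rhoK, rhoKbar_eq, H₂]
    set u : ℂ := (c : ℂ) * Complex.I
    field_simp
    ring

lemma hasDerivAt_H₁ (u t : ℂ) (h1 : t - u ≠ 0) (h2 : t + u ≠ 0) :
    HasDerivAt (H₁ u) (D₁ u t) t := by
  have hden : (t - u) * (t + u) ^ 2 ≠ 0 := mul_ne_zero h1 (pow_ne_zero 2 h2)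
  have hnum : HasDerivAt (fun s : ℂ => 2 * s) 2 t := by
    simpa using (hasDerivAt_id t).const_mul (2 : ℂ)
  have hz : HasDerivAt (fun s : ℂ => s - u) 1 t := (hasDerivAt_id t).sub_const u
  have hw : HasDerivAt (fun s : ℂ => s + u) 1 t := (hasDerivAt_id t).add_const u
  have hw2 : HasDerivAt (fun s : ℂ => (s + u) ^ 2) (2 * (t + u) ^ 1 * 1) t := hw.pow 2
  have hd : HasDerivAt (fun s : ℂ => (s - u) * (s + u) ^ 2)
      (1 * (t + u) ^ 2 + (t - u) * (2 * (t + u) ^ 1 * 1)) t := hz.mul hw2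
  have := hnum.div hd hden
  refine HasDerivAt.congr_deriv (f := H₁ u) this ?_
  simp only [D₁]
  field_simp
  ring

lemma hasDerivAt_H₂ (u t : ℂ) (h2 : t + u ≠ 0) :
    HasDerivAt (H₂ u) (D₂ u t) t := by
  have hden : (t + u) ^ 2 ≠ 0 := pow_ne_zero 2 h2
  have hz : HasDerivAt (fun s : ℂ => s - u) 1 t := (hasDerivAt_id t).sub_const u
  have hz2 : HasDerivAt (fun s : ℂ => (s - u) ^ 2) (2 * (t - u) ^ 1 * 1) t := hz.pow 2
  have hu : HasDerivAt (fun s : ℂ => s + 3 * u) 1 t := (hasDerivAt_id t).add_const (3 * u)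
  have hnum : HasDerivAt (fun s : ℂ => (s - u) ^ 2 * (s + 3 * u))
      (2 * (t - u) ^ 1 * 1 * (t + 3 * u) + (t - u) ^ 2 * 1) t := hz2.mul hu
  have hw : HasDerivAt (fun s : ℂ => s + u) 1 t := (hasDerivAt_id t).add_const u
  have hw2 : HasDerivAt (fun s : ℂ => (s + u) ^ 2) (2 * (t + u) ^ 1 * 1) t := hw.pow 2
  have := hnum.div hw2 hden
  refine HasDerivAt.congr_deriv (f := H₂ u) this ?_
  simp only [D₂]
  field_simp
  ring

lemma wronskian_eq (u t : ℂ) (h1 : t - u ≠ 0) (h2 : t + u ≠ 0) :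
    H₁ u t * D₂ u t - H₂ u t * D₁ u t = 6 / (t + u) ^ 2 := by
  have e1 : H₁ u t * D₂ u t = 2 * t * (t ^ 2 + 4 * u * t + 11 * u ^ 2) / (t + u) ^ 5 := by
    simp only [H₁, D₂]
    rw [div_mul_div_comm, div_eq_div_iff
      (mul_ne_zero (mul_ne_zero h1 (pow_ne_zero 2 h2)) (pow_ne_zero 3 h2))
      (pow_ne_zero 5 h2)]
    ring
  have e2 : H₂ u t * D₁ u t =
      (t + 3 * u) * (2 * (-2 * t ^ 2 + u * t - u ^ 2)) / (t + u) ^ 5 := by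
    simp only [H₂, D₁]
    rw [div_mul_div_comm, div_eq_div_iff
      (mul_ne_zero (pow_ne_zero 2 h2) (mul_ne_zero (pow_ne_zero 2 h1) (pow_ne_zero 3 h2)))
      (pow_ne_zero 5 h2)]
    ring
  rw [e1, e2, div_sub_div_same, div_eq_div_iff (pow_ne_zero 5 h2) (pow_ne_zero 2 h2)]
  ring

/-- linear independence of y₁, y₂ at any point r₀ > 0. -/
theorem stmt4 (c : ℝ) (a b : ℂ) (r₀ : ℝ) (hr₀ : 0 < r₀)
    (h0 : a * y₁K c r₀ + b * y₂K c r₀ = 0)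
    (h1 : a * deriv (y₁K c) r₀ + b * deriv (y₂K c) r₀ = 0) :
    a = 0 ∧ b = 0 := by
  have hre1 : ((r₀ : ℂ) - (c : ℂ) * Complex.I).re = r₀ := by simp
  have hre2 : ((r₀ : ℂ) + (c : ℂ) * Complex.I).re = r₀ := by simp
  have hre3 : ((r₀ : ℂ) + 3 * ((c : ℂ) * Complex.I)).re = r₀ := by
    simp [Complex.add_re, Complex.mul_re]
  have hz : (r₀ : ℂ) - (c : ℂ) * Complex.I ≠ 0 := fun h => by
    rw [h] at hre1; simp at hre1; exact absurd hre1.symm (ne_of_gt hr₀)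
  have hw : (r₀ : ℂ) + (c : ℂ) * Complex.I ≠ 0 := fun h => by
    rw [h] at hre2; simp at hre2; exact absurd hre2.symm (ne_of_gt hr₀)
  have hu3 : (r₀ : ℂ) + 3 * ((c : ℂ) * Complex.I) ≠ 0 := fun h => by
    rw [h] at hre3; simp at hre3; exact absurd hre3.symm (ne_of_gt hr₀)
  have hfun1 : y₁K c = fun r : ℝ => H₁ ((c : ℂ) * Complex.I) (r : ℂ) := funext (y₁K_eq c)
  have hfun2 : y₂K c = fun r : ℝ => H₂ ((c : ℂ) * Complex.I) (r : ℂ) := funext (y₂K_eq c)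
  have hD1 : deriv (y₁K c) r₀ = D₁ ((c : ℂ) * Complex.I) (r₀ : ℂ) := by
    rw [hfun1]
    exact ((hasDerivAt_H₁ _ _ hz hw).comp_ofReal).deriv
  have hD2 : deriv (y₂K c) r₀ = D₂ ((c : ℂ) * Complex.I) (r₀ : ℂ) := by
    rw [hfun2]
    exact ((hasDerivAt_H₂ _ _ hw).comp_ofReal).deriv
  rw [hD1, hD2] at h1
  rw [y₁K_eq c r₀, y₂K_eq c r₀] at h0
  set u : ℂ := (c : ℂ) * Complex.I
  set t : ℂ := (r₀ : ℂ)
  have hW : H₁ u t * D₂ u t - H₂ u t * D₁ u t = 6 / (t + u) ^ 2 := wronskian_eq u t hz hw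
  have hWne : H₁ u t * D₂ u t - H₂ u t * D₁ u t ≠ 0 := by
    rw [hW]
    exact div_ne_zero (by norm_num) (pow_ne_zero 2 hw)
  have ha : a = 0 := by
    have : a * (H₁ u t * D₂ u t - H₂ u t * D₁ u t) = 0 := by
      linear_combination D₂ u t * h0 - H₂ u t * h1
    exact (mul_eq_zero.mp this).resolve_right hWne
  have hb : b = 0 := by
    subst ha
    simp only [zero_mul, zero_add] at h0
    have hH2ne : H₂ u t ≠ 0 := by
      simp only [H₂]
      exact div_ne_zero (mul_ne_zero (pow_ne_zero 2 hz) hu3) (pow_ne_zero 2 hw)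
    exact (mul_eq_zero.mp h0).resolve_right hH2ne
  exact ⟨ha, hb⟩
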